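/- arXiv:1710.04614 — 2 statements merged into one kernel-verified Lean document; each statement's English description precedes it below -/
import Mathlib

section
/- If mono(I) is a prime ideal, then mono(I) = mono(P) for some minimal prime P of I. In particular, mono(I) = 0 iff mono(P) = 0 for some minimal prime P of I. -/
open MvPolynomial

/-- A (monic) monomial in a polynomial ring. -/
def IsMonomial {k : Type*} [Field k] {n : ℕ} (f : MvPolynomial (Fin n) k) : Prop :=
  ∃ s : Fin n →₀ ℕ, f = MvPolynomial.monomial s 1

/-- `mono I` is the largest monomial subideal of `I`: the ideal generated by all
monomials contained in `I`. -/
noncomputable def mono {k : Type*} [Field k] {n : ℕ} (I : Ideal (MvPolynomial (Fin n) k)) :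
    Ideal (MvPolynomial (Fin n) k) :=
  Ideal.span {f | IsMonomial f ∧ f ∈ I}

/-- A monomial ideal is one generated by its monomials. -/
def IsMonomialIdeal {k : Type*} [Field k] {n : ℕ} (I : Ideal (MvPolynomial (Fin n) k)) : Prop :=
  mono I = I

/-- The homogeneous maximal ideal `(x₁, …, xₙ)`. -/
noncomputable def maxIdeal (k : Type*) [Field k] (n : ℕ) : Ideal (MvPolynomial (Fin n) k) :=
  Ideal.span (Set.range MvPolynomial.X)

/-- A graded (homogeneous) ideal. -/
def IsHomogeneousIdeal {k : Type*} [Field k] {n : ℕ}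
    (I : Ideal (MvPolynomial (Fin n) k)) : Prop :=
  ∀ f ∈ I, ∀ i : ℕ, MvPolynomial.homogeneousComponent i f ∈ I

/-- Membership in `mono J` is termwise: each monomial of the support belongs to `mono J`. -/
lemma support_mem_mono {k : Type*} [Field k] {n : ℕ} (J : Ideal (MvPolynomial (Fin n) k))
    {f : MvPolynomial (Fin n) k} (hf : f ∈ mono J) :
    ∀ s ∈ f.support, (monomial s (1 : k)) ∈ mono J := by
  classical
  induction hf using Submodule.span_induction with
  | mem g hg =>
    intro s hs
    obtain ⟨⟨t, rfl⟩, hgJ⟩ := hg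
    rw [support_monomial] at hs
    simp only [if_neg (one_ne_zero), Finset.mem_singleton] at hs
    subst hs
    exact Ideal.subset_span ⟨⟨_, rfl⟩, hgJ⟩
  | zero => simp
  | add g h _ _ ihg ihh =>
    intro s hs
    rcases Finset.mem_union.mp (MvPolynomial.support_add hs) with h' | h'
    · exact ihg s h'
    · exact ihh s h'
  | smul c g _ ihg =>
    intro s hs
    rw [smul_eq_mul] at hs
    have := MvPolynomial.support_mul c g hs
    rw [Finset.mem_add] at this
    obtain ⟨a, ha, b, hb, rfl⟩ := this
    have : (monomial (a + b) (1 : k)) = monomial a 1 * monomial b 1 := by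
      rw [monomial_mul, one_mul]
    rw [this]
    exact Ideal.mul_mem_left _ _ (ihg b hb)

/-- Conversely, a polynomial all of whose support monomials lie in an ideal lies in it. -/
lemma mem_of_support_mem {k : Type*} [Field k] {n : ℕ} (K : Ideal (MvPolynomial (Fin n) k))
    {f : MvPolynomial (Fin n) k} (h : ∀ s ∈ f.support, (monomial s (1 : k)) ∈ K) :
    f ∈ K := by
  classical
  rw [← MvPolynomial.support_sum_monomial_coeff f]
  refine Ideal.sum_mem _ fun s hs => ?_
  have : (monomial s (coeff s f)) = C (coeff s f) * monomial s 1 := by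
    rw [C_mul_monomial, mul_one]
  rw [this]
  exact Ideal.mul_mem_left _ _ (h s hs)

lemma mono_mono {k : Type*} [Field k] {n : ℕ} {I J : Ideal (MvPolynomial (Fin n) k)}
    (h : I ≤ J) : mono I ≤ mono J :=
  Ideal.span_mono fun _ hf => ⟨hf.1, h hf.2⟩

lemma mono_le {k : Type*} [Field k] {n : ℕ} (I : Ideal (MvPolynomial (Fin n) k)) :
    mono I ≤ I :=
  Ideal.span_le.mpr fun _ hf => hf.2

theorem mono_prime_iff_minimalPrime {k : Type*} [Field k] {n : ℕ}
    (I : Ideal (MvPolynomial (Fin n) k)) (hI : I ≠ ⊤) :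
    ((mono I).IsPrime → ∃ P ∈ I.minimalPrimes, mono I = mono P) ∧
      (mono I = ⊥ ↔ ∃ P ∈ I.minimalPrimes, mono P = ⊥) := by
  classical
  have key : (mono I).IsPrime → ∃ P ∈ I.minimalPrimes, mono I = mono P := by
    intro hp
    -- the minimal primes form a finite set
    have hfin : I.minimalPrimes.Finite := by
      rw [Ideal.minimalPrimes_eq_comap]
      exact (minimalPrimes.finite_of_isNoetherianRing _).image _
    -- the finite intersection of the `mono P` is contained in `mono I`
    have hinf : hfin.toFinset.inf (fun P => mono P) ≤ mono I := by
      intro f hf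
      rw [Submodule.mem_finsetInf] at hf
      refine mem_of_support_mem _ fun s hs => ?_
      -- each support monomial of `f` lies in every minimal prime, hence in `√I`
      have hrad : (monomial s (1 : k)) ∈ I.radical := by
        rw [← Ideal.sInf_minimalPrimes, Ideal.mem_sInf]
        intro P hP
        exact mono_le P (support_mem_mono P (hf P (hfin.mem_toFinset.mpr hP)) s hs)
      obtain ⟨t, ht⟩ := hrad
      -- the power is still a monomial, so it lies in `mono I`
      have hmem : (monomial s (1 : k)) ^ t ∈ mono I := by
        rw [monomial_pow, one_pow]
        exact Ideal.subset_span ⟨⟨_, rfl⟩, by rwa [monomial_pow, one_pow] at ht⟩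
      -- primality of `mono I` gives radicality
      have : (monomial s (1 : k)) ∈ (mono I).radical := ⟨t, hmem⟩
      rwa [hp.radical] at this
    obtain ⟨P, hP, hPle⟩ := (hp.inf_le').mp hinf
    rw [hfin.mem_toFinset] at hP
    exact ⟨P, hP, le_antisymm (mono_mono hP.1.2) hPle⟩
  refine ⟨key, ?_, ?_⟩
  · intro h0
    have : (mono I).IsPrime := by rw [h0]; exact Ideal.bot_prime
    obtain ⟨P, hP, hPeq⟩ := key this
    exact ⟨P, hP, by rw [← hPeq, h0]⟩
  · rintro ⟨P, hP, hP0⟩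
    have := mono_mono (k := k) hP.1.2
    rw [hP0, le_bot_iff] at this
    exact this
end

section
/- Every associated prime of R/mono(I) is of the form mono(P) for some associated prime P of R/I; i.e., Ass(R/mono(I)) ⊆ { mono(P) : P ∈ Ass(R/I) }. -/
open MvPolynomial

set_option maxHeartbeats 1000000

section Aux

variable {k : Type*} [Field k] {n : ℕ}

local notation "R" => MvPolynomial (Fin n) k
local notation "μ" => (Fin n →₀ ℕ)

/-- KSL: membership in `mono I`. -/
theorem mem_mono_iff {I : Ideal R} {f : R} :
    f ∈ mono I ↔ ∀ s ∈ f.support, (monomial s 1 : R) ∈ I := by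
  classical
  constructor
  · intro hf
    refine Submodule.span_induction ?_ ?_ ?_ ?_ hf
    · rintro g ⟨⟨t, rfl⟩, hgI⟩ s hs
      rw [support_monomial, if_neg (one_ne_zero)] at hs
      simp only [Finset.mem_singleton] at hs
      subst hs; exact hgI
    · simp
    · intro p q _ _ hp hq s hs
      rcases Finset.mem_union.1 (MvPolynomial.support_add hs) with h | h
      · exact hp s h
      · exact hq s h
    · intro r p _ hp s hs
      rw [smul_eq_mul] at hs
      obtain ⟨u, hu, v, hv, rfl⟩ := Finset.mem_add.1 (MvPolynomial.support_mul _ _ hs)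
      have : (monomial (u + v) (1:k) : R) = monomial u 1 * monomial v 1 := by
        rw [monomial_mul, one_mul]
      rw [this]
      exact Ideal.mul_mem_left _ _ (hp v hv)
  · intro h
    have hsum : (∑ v ∈ f.support, (monomial v (coeff v f) : R)) ∈ mono I := by
      refine Ideal.sum_mem _ fun s hs => ?_
      have : (monomial s (coeff s f) : R) = C (coeff s f) * monomial s 1 := by
        rw [C_mul_monomial, mul_one]
      rw [this]
      exact Ideal.mul_mem_left _ _ (Ideal.subset_span ⟨⟨s, rfl⟩, h s hs⟩)
    rwa [← MvPolynomial.as_sum f] at hsum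

theorem mono_le_s7 {I : Ideal R} : mono I ≤ I :=
  Ideal.span_le.2 fun _ h => h.2

theorem monomial_mem_mono {I : Ideal R} {s : μ} :
    (monomial s 1 : R) ∈ mono I ↔ (monomial s 1 : R) ∈ I :=
  ⟨fun h => mono_le_s7 h, fun h => Ideal.subset_span ⟨⟨s, rfl⟩, h⟩⟩

theorem mono_ne_top {I : Ideal R} (hI : I ≠ ⊤) : mono I ≠ ⊤ := fun h =>
  hI (top_le_iff.1 (h ▸ mono_le_s7 : (⊤ : Ideal R) ≤ I))

theorem mono_mono_s7 {I J : Ideal R} (h : I ≤ J) : mono I ≤ mono J := by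
  intro f hf
  rw [mem_mono_iff] at hf ⊢
  exact fun s hs => h (hf s hs)

theorem mono_finset_inf {ι : Type*} (t : Finset ι) (f : ι → Ideal R) :
    mono (t.inf f) = t.inf fun J => mono (f J) := by
  ext g
  simp only [mem_mono_iff, Submodule.mem_finsetInf]
  constructor
  · exact fun h i hi s hs => h s hs i hi
  · exact fun h s hs i hi => h i hi s hs
noncomputable def mOrd (n : ℕ) : MonomialOrder (Fin n) := MonomialOrder.lex

theorem exists_max_support {f : R} (hf : f ≠ 0) :
    ∃ a ∈ f.support, ∀ s ∈ f.support, (mOrd n).toSyn s ≤ (mOrd n).toSyn a := by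
  obtain ⟨a, ha, h⟩ := Finset.exists_max_image f.support (fun s => (mOrd n).toSyn s)
    (MvPolynomial.support_nonempty.2 hf)
  exact ⟨a, ha, h⟩

theorem coeff_mul_of_bounds {p q : R} {a b : μ}
    (ha : ∀ s ∈ p.support, (mOrd n).toSyn s ≤ (mOrd n).toSyn a)
    (hb : ∀ s ∈ q.support, (mOrd n).toSyn s ≤ (mOrd n).toSyn b) :
    coeff (a + b) (p * q) = coeff a p * coeff b q := by
  classical
  rw [coeff_mul]
  refine Finset.sum_eq_single (a, b) ?_ ?_
  · rintro ⟨s, u⟩ hmem hne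
    simp only [Finset.HasAntidiagonal.mem_antidiagonal] at hmem
    by_cases hs : coeff s p = 0
    · simp [hs]
    by_cases hu : coeff u q = 0
    · simp [hu]
    exfalso
    have hs' : (mOrd n).toSyn s ≤ (mOrd n).toSyn a :=
      ha s (MvPolynomial.mem_support_iff.2 hs)
    have hu' : (mOrd n).toSyn u ≤ (mOrd n).toSyn b :=
      hb u (MvPolynomial.mem_support_iff.2 hu)
    have hsum : (mOrd n).toSyn s + (mOrd n).toSyn u
        = (mOrd n).toSyn a + (mOrd n).toSyn b := by
      rw [← map_add, ← map_add, hmem]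
    have hsa : (mOrd n).toSyn s = (mOrd n).toSyn a := by
      rcases lt_or_eq_of_le hs' with h | h
      · exact absurd hsum (ne_of_lt (add_lt_add_of_lt_of_le h hu'))
      · exact h
    have hseq : s = a := (mOrd n).toSyn.injective hsa
    subst hseq
    have : u = b := by
      have := add_left_cancel hmem
      exact this
    exact hne (by simp [this])
  · intro h
    simp [Finset.HasAntidiagonal.mem_antidiagonal] at h

theorem support_mul_bound {p q : R} {a b : μ}
    (ha : ∀ s ∈ p.support, (mOrd n).toSyn s ≤ (mOrd n).toSyn a)
    (hb : ∀ s ∈ q.support, (mOrd n).toSyn s ≤ (mOrd n).toSyn b) :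
    ∀ s ∈ (p * q).support, (mOrd n).toSyn s ≤ (mOrd n).toSyn (a + b) := by
  classical
  intro s hs
  obtain ⟨u, hu, v, hv, rfl⟩ := Finset.mem_add.1 (MvPolynomial.support_mul _ _ hs)
  rw [map_add, map_add]
  exact add_le_add (ha u hu) (hb v hv)

theorem coeff_pow_of_bounds {p : R} {a : μ}
    (ha : ∀ s ∈ p.support, (mOrd n).toSyn s ≤ (mOrd n).toSyn a) (e : ℕ) :
    coeff (e • a) (p ^ e) = (coeff a p) ^ e ∧
      ∀ s ∈ (p ^ e).support, (mOrd n).toSyn s ≤ (mOrd n).toSyn (e • a) := by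
  induction e with
  | zero =>
    constructor
    · simp [MvPolynomial.coeff_one]
    · intro s hs
      rw [pow_zero] at hs
      have hc := MvPolynomial.mem_support_iff.1 hs
      rw [MvPolynomial.coeff_one] at hc
      have : (0:μ) = s := by
        by_contra h0
        exact hc (if_neg h0)
      subst this
      simp
  | succ e ih =>
    have hstep : (e + 1) • a = e • a + a := by rw [succ_nsmul]
    constructor
    · rw [pow_succ, hstep, coeff_mul_of_bounds ih.2 ha, ih.1, pow_succ]
    · rw [pow_succ, hstep]
      exact support_mul_bound ih.2 ha

theorem mono_radical_le {I : Ideal R} : mono I.radical ≤ (mono I).radical := by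
  rw [mono, Ideal.span_le]
  rintro g ⟨⟨s, rfl⟩, hg⟩
  obtain ⟨e, he⟩ := Ideal.mem_radical_iff.1 hg
  rw [monomial_pow, one_pow] at he
  exact Ideal.mem_radical_iff.2 ⟨e, by rw [monomial_pow, one_pow]; exact monomial_mem_mono.2 he⟩

theorem support_sub_monomial_subset (f : R) (a : μ) :
    (f - monomial a (coeff a f)).support ⊆ f.support.erase a := by
  classical
  intro s hs
  have hc := MvPolynomial.mem_support_iff.1 hs
  rw [MvPolynomial.coeff_sub, MvPolynomial.coeff_monomial] at hc
  rcases eq_or_ne a s with rfl | hne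
  · simp at hc
  · rw [if_neg hne, sub_zero] at hc
    exact Finset.mem_erase.2 ⟨Ne.symm hne, MvPolynomial.mem_support_iff.2 hc⟩

theorem radical_mono_le {Q : Ideal R} :
    (mono Q).radical ≤ mono Q.radical := by
  classical
  suffices h : ∀ N : ℕ, ∀ f : R, f.support.card ≤ N → f ∈ (mono Q).radical →
      f ∈ mono Q.radical by
    exact fun f hf => h f.support.card f le_rfl hf
  intro N
  induction N with
  | zero =>
    intro f hcard _
    have : f = 0 := MvPolynomial.support_eq_empty.1 (Finset.card_eq_zero.1 (Nat.le_zero.1 hcard))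
    rw [this]; exact zero_mem _
  | succ N ih =>
    intro f hcard hf
    rcases eq_or_ne f 0 with rfl | hf0
    · exact zero_mem _
    obtain ⟨a, ha, hmax⟩ := exists_max_support hf0
    obtain ⟨e, he⟩ := Ideal.mem_radical_iff.1 hf
    -- the monomial x^a lies in rad Q
    have hcoeff : coeff (e • a) (f ^ e) = (coeff a f) ^ e := (coeff_pow_of_bounds hmax e).1
    have hc0 : coeff a f ≠ 0 := MvPolynomial.mem_support_iff.1 ha
    have hmem : (e • a) ∈ (f ^ e).support :=
      MvPolynomial.mem_support_iff.2 (by rw [hcoeff]; exact pow_ne_zero _ hc0)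
    have hxa : (monomial a 1 : R) ∈ Q.radical := by
      refine Ideal.mem_radical_iff.2 ⟨e, ?_⟩
      rw [monomial_pow, one_pow]
      exact mem_mono_iff.1 he _ hmem
    -- subtract the leading term and induct
    set f' := f - monomial a (coeff a f) with hf'
    have hxa' : (monomial a (coeff a f) : R) ∈ mono Q.radical := by
      have : (monomial a (coeff a f) : R) = C (coeff a f) * monomial a 1 := by
        rw [C_mul_monomial, mul_one]
      rw [this]
      exact Ideal.mul_mem_left _ _ (monomial_mem_mono.2 hxa)
    have hf'rad : f' ∈ (mono Q).radical := by
      exact sub_mem hf (mono_radical_le hxa')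
    have hcard' : f'.support.card ≤ N := by
      have h1 : f'.support.card < f.support.card :=
        lt_of_le_of_lt (Finset.card_le_card (support_sub_monomial_subset f a))
          (Finset.card_erase_lt_of_mem ha)
      omega
    have := ih f' hcard' hf'rad
    have : f = f' + monomial a (coeff a f) := by ring
    rw [this]
    exact add_mem (ih f' hcard' hf'rad) hxa'

theorem monomial_mul_mem_mono {Q : Ideal R} {a : μ} {c : k}
    (ha : (monomial a 1 : R) ∈ Q) (g : R) : (monomial a c : R) * g ∈ mono Q := by
  classical
  refine mem_mono_iff.2 fun s hs => ?_
  obtain ⟨u, hu, v, hv, rfl⟩ := Finset.mem_add.1 (MvPolynomial.support_mul _ _ hs)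
  rcases eq_or_ne c 0 with rfl | hc
  · simp [MvPolynomial.support_monomial] at hu
  rw [MvPolynomial.support_monomial, if_neg hc] at hu
  simp only [Finset.mem_singleton] at hu
  rw [hu]
  have : (monomial (a + v) (1:k) : R) = monomial v 1 * monomial a 1 := by
    rw [monomial_mul, one_mul, add_comm]
  rw [this]
  exact Ideal.mul_mem_left _ _ ha

theorem aux_inner {Q : Ideal R} (hQ : Q.IsPrimary) {g : R} {b : μ}
    (hbg : b ∈ g.support) (hb : ∀ u ∈ g.support, (mOrd n).toSyn u ≤ (mOrd n).toSyn b) :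
    ∀ M : ℕ, ∀ f : R, f.support.card ≤ M → f * g ∈ mono Q → f ∉ mono Q →
      (monomial b 1 : R) ∈ Q.radical := by
  classical
  intro M
  induction M with
  | zero =>
    intro f hcard _ hfQ
    exact absurd (by
      rw [MvPolynomial.support_eq_empty.1 (Finset.card_eq_zero.1 (Nat.le_zero.1 hcard))]
      exact zero_mem _) hfQ
  | succ M ih =>
    intro f hcard hfg hfQ
    have hf0 : f ≠ 0 := fun h => hfQ (h ▸ zero_mem _)
    obtain ⟨a, ha, hmax⟩ := exists_max_support hf0
    by_cases hxa : (monomial a 1 : R) ∈ Q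
    · -- subtract leading term of f
      set f' := f - monomial a (coeff a f) with hf'
      have hf'Q : f' ∉ mono Q := by
        intro h
        apply hfQ
        have : f = f' + monomial a (coeff a f) := by ring
        rw [this]
        refine add_mem h ?_
        have : (monomial a (coeff a f) : R) = C (coeff a f) * monomial a 1 := by
          rw [C_mul_monomial, mul_one]
        rw [this]
        exact Ideal.mul_mem_left _ _ (monomial_mem_mono.2 hxa)
      have hf'g : f' * g ∈ mono Q := by
        have : f' * g = f * g - (monomial a (coeff a f)) * g := by ring
        rw [this]
        exact sub_mem hfg (monomial_mul_mem_mono hxa g)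
      have hcard' : f'.support.card ≤ M := by
        have h1 : f'.support.card < f.support.card :=
          lt_of_le_of_lt (Finset.card_le_card (support_sub_monomial_subset f a))
            (Finset.card_erase_lt_of_mem ha)
        omega
      exact ih f' hcard' hf'g hf'Q
    · -- leading coefficient gives it directly
      have hc0 : coeff a f ≠ 0 := MvPolynomial.mem_support_iff.1 ha
      have hd0 : coeff b g ≠ 0 := MvPolynomial.mem_support_iff.1 hbg
      have hcoeff : coeff (a + b) (f * g) = coeff a f * coeff b g :=
        coeff_mul_of_bounds hmax hb
      have hmem : (a + b) ∈ (f * g).support :=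
        MvPolynomial.mem_support_iff.2 (by rw [hcoeff]; exact mul_ne_zero hc0 hd0)
      have hab : (monomial (a + b) (1:k) : R) ∈ Q := mem_mono_iff.1 hfg _ hmem
      have hsplit : (monomial (a + b) (1:k) : R) = monomial a 1 * monomial b 1 := by
        rw [monomial_mul, one_mul]
      rw [hsplit] at hab
      rcases (Ideal.isPrimary_iff.1 hQ).2 hab with h | h
      · exact absurd h hxa
      · exact h

theorem aux_outer {Q : Ideal R} (hQ : Q.IsPrimary) :
    ∀ N : ℕ, ∀ g f : R, g.support.card ≤ N → f * g ∈ mono Q → f ∉ mono Q →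
      g ∈ mono Q.radical := by
  classical
  intro N
  induction N with
  | zero =>
    intro g f hcard _ _
    rw [MvPolynomial.support_eq_empty.1 (Finset.card_eq_zero.1 (Nat.le_zero.1 hcard))]
    exact zero_mem _
  | succ N ih =>
    intro g f hcard hfg hfQ
    rcases eq_or_ne g 0 with rfl | hg0
    · exact zero_mem _
    obtain ⟨b, hbg, hb⟩ := exists_max_support hg0
    have hxb : (monomial b 1 : R) ∈ Q.radical :=
      aux_inner hQ hbg hb f.support.card f le_rfl hfg hfQ
    obtain ⟨e, he⟩ := Ideal.mem_radical_iff.1 hxb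
    have he1 : ((monomial b 1 : R)) ^ (e + 1) ∈ Q := by
      rw [pow_succ]
      exact Ideal.mul_mem_right _ _ he
    set d := coeff b g with hd
    set g' := g - monomial b d with hg'
    -- key : f * g' ^ (e+1) ∈ mono Q
    have hkey : f * g' ^ (e + 1) ∈ mono Q := by
      rw [hg', sub_pow]
      rw [Finset.mul_sum]
      refine Ideal.sum_mem _ fun i hi => ?_
      rcases Nat.eq_zero_or_pos i with rfl | hipos
      · -- term with (monomial b d)^(e+1)
        have hmon : (monomial b d : R) ^ (e + 1) ∈ mono Q := by
          rw [monomial_pow]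
          have : (monomial ((e+1) • b) (d ^ (e+1)) : R)
              = C (d ^ (e+1)) * monomial ((e+1) • b) 1 := by
            rw [C_mul_monomial, mul_one]
          rw [this]
          refine Ideal.mul_mem_left _ _ (monomial_mem_mono.2 ?_)
          have h2 : (monomial ((e+1) • b) (1:k) : R) = (monomial b 1) ^ (e+1) := by
            rw [monomial_pow, one_pow]
          rw [h2]
          exact he1
        have : f * ((-1 : R) ^ (0 + (e + 1)) * g ^ 0 * (monomial b d) ^ (e + 1 - 0)
              * ((e+1).choose 0 : R))
            = (f * ((-1 : R) ^ (0 + (e + 1)) * g ^ 0 * ((e+1).choose 0 : R)))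
              * (monomial b d) ^ (e + 1) := by
          simp only [Nat.sub_zero]
          ring
        rw [this]
        exact Ideal.mul_mem_left _ _ hmon
      · obtain ⟨i', rfl⟩ : ∃ i', i = i' + 1 := ⟨i - 1, by omega⟩
        have : f * ((-1 : R) ^ (i' + 1 + (e + 1)) * g ^ (i' + 1)
              * (monomial b d) ^ (e + 1 - (i' + 1)) * ((e+1).choose (i'+1) : R))
            = (f * g) * ((-1 : R) ^ (i' + 1 + (e + 1)) * g ^ i'
              * (monomial b d) ^ (e + 1 - (i' + 1)) * ((e+1).choose (i'+1) : R)) := by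
          rw [pow_succ]
          ring
        rw [this]
        exact Ideal.mul_mem_right _ _ hfg
    -- minimal power j with f * g'^j ∈ mono Q
    have hex : ∃ j, f * g' ^ j ∈ mono Q := ⟨e + 1, hkey⟩
    have hj0 : Nat.find hex ≠ 0 := by
      intro h
      have := Nat.find_spec hex
      rw [h, pow_zero, mul_one] at this
      exact hfQ this
    obtain ⟨j', hj'⟩ : ∃ j', Nat.find hex = j' + 1 := ⟨Nat.find hex - 1, by omega⟩
    have hmin : f * g' ^ j' ∉ mono Q := Nat.find_min hex (by omega)
    have hspec : (f * g' ^ j') * g' ∈ mono Q := by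
      rw [mul_assoc, ← pow_succ, ← hj']
      exact Nat.find_spec hex
    have hcard' : g'.support.card ≤ N := by
      have h1 : g'.support.card < g.support.card :=
        lt_of_le_of_lt (Finset.card_le_card (support_sub_monomial_subset g b))
          (Finset.card_erase_lt_of_mem hbg)
      omega
    have hg'mem : g' ∈ mono Q.radical := ih g' (f * g' ^ j') hcard' hspec hmin
    have : g = g' + monomial b d := by rw [hg']; ring
    rw [this]
    refine add_mem hg'mem ?_
    have : (monomial b d : R) = C d * monomial b 1 := by rw [C_mul_monomial, mul_one]
    rw [this]
    exact Ideal.mul_mem_left _ _ (monomial_mem_mono.2 hxb)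

theorem mono_isPrimary {Q : Ideal R} (hQ : Q.IsPrimary) : (mono Q).IsPrimary := by
  rw [Ideal.isPrimary_iff]
  refine ⟨mono_ne_top (Ideal.isPrimary_iff.1 hQ).1, fun {x y} hxy => ?_⟩
  by_cases hx : x ∈ mono Q
  · exact Or.inl hx
  · exact Or.inr (mono_radical_le (aux_outer hQ y.support.card y x le_rfl hxy hx))

theorem radical_mono_eq {Q : Ideal R} : (mono Q).radical = mono Q.radical :=
  le_antisymm radical_mono_le mono_radical_le

end Aux
section CommAlg
variable {S : Type*} [CommRing S]

theorem ass_prod_subset {M N : Type*} [AddCommGroup M] [Module S M]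
    [AddCommGroup N] [Module S N] :
    associatedPrimes S (M × N) ⊆ associatedPrimes S M ∪ associatedPrimes S N := by
  rw [associatedPrimes.prod]

theorem ass_quot_inf_subset (A B : Ideal S) :
    associatedPrimes S (S ⧸ (A ⊓ B)) ⊆
      associatedPrimes S (S ⧸ A) ∪ associatedPrimes S (S ⧸ B) := by
  have hA : A ⊓ B ≤ Submodule.comap (LinearMap.id (R := S)) A := fun x hx => hx.1
  have hB : A ⊓ B ≤ Submodule.comap (LinearMap.id (R := S)) B := fun x hx => hx.2
  set ψ : S ⧸ (A ⊓ B) →ₗ[S] (S ⧸ A) × (S ⧸ B) :=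
    LinearMap.prod (Submodule.mapQ _ _ _ hA) (Submodule.mapQ _ _ _ hB) with hψ
  have hinj : Function.Injective ψ := by
    intro u v huv
    obtain ⟨r, rfl⟩ := Submodule.Quotient.mk_surjective _ u
    obtain ⟨s, rfl⟩ := Submodule.Quotient.mk_surjective _ v
    have h1 := congrArg Prod.fst huv
    have h2 := congrArg Prod.snd huv
    simp only [hψ, LinearMap.prod_apply, Function.prod, Submodule.mapQ_apply,
      LinearMap.id_coe, id_eq, LinearMap.id_apply] at h1 h2
    rw [Submodule.Quotient.eq] at h1 h2 ⊢
    exact ⟨h1, h2⟩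
  exact fun P hP =>
    ass_prod_subset (associatedPrimes.subset_of_injective hinj hP)

theorem ass_quot_finset_inf_subset {ι : Type*} [DecidableEq ι] (t : Finset ι)
    (f : ι → Ideal S) :
    associatedPrimes S (S ⧸ t.inf f) ⊆ ⋃ J ∈ t, associatedPrimes S (S ⧸ f J) := by
  induction t using Finset.induction_on with
  | empty =>
    intro P hP
    exfalso
    have hsub : Subsingleton (S ⧸ (Finset.inf ∅ f)) := by
      rw [Finset.inf_empty]
      exact Submodule.Quotient.subsingleton_iff.2 rfl
    exact not_isAssociatedPrime_of_subsingleton (M := S ⧸ (Finset.inf ∅ f)) hP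
  | insert _ _ hJt ih =>
    rename_i J t'
    intro P hP
    rw [Finset.inf_insert] at hP
    rcases ass_quot_inf_subset _ _ hP with h | h
    · exact Set.mem_biUnion (Finset.mem_insert_self _ _) h
    · obtain ⟨K, hK, hPK⟩ := Set.mem_iUnion₂.1 (ih h)
      exact Set.mem_biUnion (Finset.mem_insert_of_mem hK) hPK

end CommAlg

section Uniq
variable {S : Type*} [CommRing S] [IsNoetherianRing S]

theorem radical_mem_ass_of_minimal {t : Finset (Ideal S)} {I : Ideal S}
    [DecidableEq (Ideal S)]
    (hinf : t.inf id = I) (hprim : ∀ J ∈ t, J.IsPrimary)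
    (hirr : ∀ J ∈ t, ¬ (t.erase J).inf id ≤ J)
    {J₀ : Ideal S} (hJ₀ : J₀ ∈ t) :
    J₀.radical ∈ associatedPrimes S (S ⧸ I) := by
  classical
  obtain ⟨x, hx, hxJ₀⟩ := SetLike.not_le_iff_exists.1 (hirr J₀ hJ₀)
  have hIeq : J₀ ⊓ (t.erase J₀).inf id = I := by
    rw [← hinf]
    conv_rhs => rw [← Finset.insert_erase hJ₀]
    rw [Finset.inf_insert]
    rfl
  have hIJ₀ : I ≤ J₀ := hinf ▸ Finset.inf_le hJ₀
  set P₀ := J₀.radical with hP₀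
  have hP₀prime : P₀.IsPrime := Ideal.isPrime_radical (hprim J₀ hJ₀)
  obtain ⟨e, he⟩ := Ideal.exists_radical_pow_le_of_fg J₀ (IsNoetherian.noetherian _)
  have hex : ∃ m, P₀ ^ m * Ideal.span {x} ≤ I := by
    refine ⟨e, ?_⟩
    rw [← hIeq]
    refine le_inf (le_trans Ideal.mul_le_left he) ?_
    refine le_trans Ideal.mul_le_right ?_
    rw [Ideal.span_le, Set.singleton_subset_iff]
    exact hx
  have hm0 : Nat.find hex ≠ 0 := by
    intro h
    have := Nat.find_spec hex
    rw [h, pow_zero, one_mul, Ideal.span_le, Set.singleton_subset_iff] at this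
    exact hxJ₀ (hIJ₀ this)
  obtain ⟨m', hm'⟩ : ∃ m', Nat.find hex = m' + 1 := ⟨Nat.find hex - 1, by omega⟩
  have hm : P₀ ^ (m' + 1) * Ideal.span {x} ≤ I := hm' ▸ Nat.find_spec hex
  have hnot : ¬ (P₀ ^ m' * Ideal.span {x} ≤ I) := Nat.find_min hex (by omega)
  obtain ⟨y, hy, hyI⟩ := SetLike.not_le_iff_exists.1 hnot
  have hyErase : y ∈ (t.erase J₀).inf id := by
    have h1 : P₀ ^ m' * Ideal.span {x} ≤ Ideal.span {x} := Ideal.mul_le_right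
    have h2 : Ideal.span {x} ≤ (t.erase J₀).inf id := by
      rw [Ideal.span_le, Set.singleton_subset_iff]; exact hx
    exact h2 (h1 hy)
  have hyJ₀ : y ∉ J₀ := by
    intro h
    exact hyI (hIeq ▸ ⟨h, hyErase⟩)
  -- P₀ = (I : y)
  have hfwd : ∀ z ∈ P₀, z * y ∈ I := by
    intro z hz
    have : z * y ∈ P₀ * (P₀ ^ m' * Ideal.span {x}) := Ideal.mul_mem_mul hz hy
    rw [← mul_assoc, ← pow_succ'] at this
    exact hm this
  have hbwd : ∀ z, z * y ∈ I → z ∈ P₀ := by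
    intro z hz
    have hzy : y * z ∈ J₀ := by
      rw [mul_comm]; exact hIJ₀ hz
    rcases (Ideal.isPrimary_iff.1 (hprim J₀ hJ₀)).2 hzy with h | h
    · exact absurd h hyJ₀
    · exact h
  refine ⟨hP₀prime, Submodule.Quotient.mk y, ?_⟩
  have hcol : (⊥ : Submodule S (S ⧸ I)).colon {Submodule.Quotient.mk y} = P₀ := by
    ext z
    rw [Submodule.mem_colon_singleton, Submodule.mem_bot, ← Submodule.Quotient.mk_smul,
      Submodule.Quotient.mk_eq_zero, smul_eq_mul]
    exact ⟨fun h => hbwd z h, fun h => hfwd z h⟩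
  rw [hcol, hP₀prime.radical]

end Uniq

theorem associatedPrimes_mono_subset {k : Type*} [Field k] {n : ℕ}
    (I : Ideal (MvPolynomial (Fin n) k)) (hI : I ≠ ⊤) :
    ∀ P ∈ associatedPrimes (MvPolynomial (Fin n) k) (MvPolynomial (Fin n) k ⧸ mono I),
      ∃ Q ∈ associatedPrimes (MvPolynomial (Fin n) k) (MvPolynomial (Fin n) k ⧸ I),
        P = mono Q := by
  classical
  intro P hP
  obtain ⟨t, htinf, htprim, _htrad, htirr⟩ :=
    Submodule.IsLasker.exists_isMinimalPrimaryDecomposition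
      (Submodule.isLasker (MvPolynomial (Fin n) k) (MvPolynomial (Fin n) k)) I
  have hmono : mono I = t.inf fun J => mono J := by
    rw [← htinf, mono_finset_inf]
    rfl
  rw [hmono] at hP
  have hunion := ass_quot_finset_inf_subset t (fun J => mono J) hP
  obtain ⟨J, hJ, hPJ⟩ := Set.mem_iUnion₂.1 hunion
  have hJt : J ∈ t := hJ
  have hprimJ : (mono J).IsPrimary := mono_isPrimary (htprim hJt)
  have hPeq : P = (mono J).radical := IsAssociatedPrime.eq_radical hprimJ hPJ
  refine ⟨Ideal.radical J, ?_, by rw [hPeq, radical_mono_eq]⟩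
  exact radical_mem_ass_of_minimal htinf (fun _ h => htprim h) (fun _ h => htirr h) hJt
end
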